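/- Let $\beta > 0$ and $\gamma \in \mathbb{R}$, and fix $\varrho_0 > 0$. There exist constants $C \geq 1$ and $c_0 > 0$ depending only on $\beta$, $\gamma$, $\varrho_0$ such that: for every $\varrho \in [0, \varrho_0]$ and every $C^1$ solution $(A,\Omega,\Theta) : [0,\infty) \to \mathbb{C}^3$ of the system $A' + \varrho\Omega = 0$, $\Omega' + \varrho^2\Omega - \varrho A - \gamma\varrho\Theta = 0$, $\Theta' + \beta\varrho^2\Theta + \gamma\varrho\Omega = 0$, one has $|(A,\Omega,\Theta)(t)| \leq C e^{-\frac{c_0}{2}\varrho^2 t}\,|(A,\Omega,\Theta)(0)|$ for all $t \geq 0$. -/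

import Mathlib

open Complex

lemma quad3 (β γ ϱ₀ δ ϱ a o p : ℝ) (hδ : 0 < δ)
    (h1 : 4*δ*(1+ϱ₀^2+γ^2) ≤ 1) (h2 : 4*δ*(1+ϱ₀^2+γ^2) ≤ β)
    (hϱ0 : 0 ≤ ϱ) (hϱ : ϱ ≤ ϱ₀) :
    2*(a*(-(ϱ*o)) + o*(-(ϱ^2*o) + ϱ*a + γ*ϱ*p) + p*(-(β*ϱ^2*p) - γ*ϱ*o))
      - 2*δ*ϱ*((-(ϱ*o))*o + a*(-(ϱ^2*o) + ϱ*a + γ*ϱ*p))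
      + δ*ϱ^2*(a^2 + o^2 + p^2 - 2*δ*ϱ*(a*o)) ≤ 0 := by
  have hδ4 : δ ≤ 1/4 := by nlinarith [sq_nonneg ϱ₀, sq_nonneg γ]
  have hq0 : 0 ≤ ϱ*(1-δ) := by nlinarith
  have hq : ϱ*(1-δ) ≤ ϱ₀ := by nlinarith
  have hsq : (ϱ*(1-δ))^2 ≤ ϱ₀^2 := by nlinarith
  have key : -δ*a^2 + (3*δ-2)*o^2 + (δ-2*β)*p^2 + 2*δ*(ϱ*(1-δ))*(a*o) - 2*δ*γ*(a*p) ≤ 0 := by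
    nlinarith [mul_nonneg hδ.le (sq_nonneg (a - 2*(ϱ*(1-δ))*o)),
      mul_nonneg hδ.le (sq_nonneg (a + 2*γ*p)),
      mul_nonneg (mul_nonneg hδ.le (sq_nonneg o)) (sub_nonneg.2 hsq),
      mul_nonneg (sub_nonneg.2 h1) (sq_nonneg o),
      mul_nonneg (sub_nonneg.2 h2) (sq_nonneg p),
      mul_nonneg hδ.le (sq_nonneg o),
      mul_nonneg (mul_nonneg hδ.le (sq_nonneg γ)) (sq_nonneg o),
      mul_nonneg (mul_nonneg hδ.le (sq_nonneg ϱ₀)) (sq_nonneg o),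
      mul_nonneg hδ.le (sq_nonneg p),
      mul_nonneg (mul_nonneg hδ.le (sq_nonneg ϱ₀)) (sq_nonneg p),
      mul_nonneg (mul_nonneg hδ.le (sq_nonneg γ)) (sq_nonneg p)]
  nlinarith [mul_nonneg (sq_nonneg ϱ) (neg_nonneg.2 key)]

lemma comp_re {F : ℝ → ℂ} {F' : ℂ} {t : ℝ} (h : HasDerivAt F F' t) :
    HasDerivAt (fun s => (F s).re) F'.re t := by
  exact (Complex.reCLM.hasFDerivAt.comp_hasDerivAt t h)

lemma comp_im {F : ℝ → ℂ} {F' : ℂ} {t : ℝ} (h : HasDerivAt F F' t) :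
    HasDerivAt (fun s => (F s).im) F'.im t := by
  exact (Complex.imCLM.hasFDerivAt.comp_hasDerivAt t h)

set_option maxHeartbeats 2000000 in
/-- uniform exponential decay `|(A,Ω,Θ)(t)| ≤ C e^{-c₀ϱ²t/2} |(A,Ω,Θ)(0)|`
for solutions of the frequency-localized linearized system, uniformly for `ϱ ∈ [0, ϱ₀]`. -/
theorem stmt6 (β γ ϱ₀ : ℝ) (hβ : 0 < β) (hϱ₀ : 0 < ϱ₀) :
    ∃ C : ℝ, 1 ≤ C ∧ ∃ c₀ : ℝ, 0 < c₀ ∧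
      ∀ ϱ ∈ Set.Icc (0:ℝ) ϱ₀, ∀ A Ω Θ A' Ω' Θ' : ℝ → ℂ,
        (∀ t : ℝ, HasDerivAt A (A' t) t) →
        (∀ t : ℝ, HasDerivAt Ω (Ω' t) t) →
        (∀ t : ℝ, HasDerivAt Θ (Θ' t) t) →
        (∀ t : ℝ, A' t + (ϱ : ℂ) * Ω t = 0) →
        (∀ t : ℝ, Ω' t + (ϱ : ℂ) ^ 2 * Ω t - (ϱ : ℂ) * A t - (γ : ℂ) * ϱ * Θ t = 0) →
        (∀ t : ℝ, Θ' t + (β : ℂ) * ϱ ^ 2 * Θ t + (γ : ℂ) * ϱ * Ω t = 0) →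
        ∀ t : ℝ, 0 ≤ t →
          Real.sqrt (‖A t‖ ^ 2 + ‖Ω t‖ ^ 2
              + ‖Θ t‖ ^ 2)
            ≤ C * Real.exp (-(c₀ / 2) * ϱ ^ 2 * t)
              * Real.sqrt (‖A 0‖ ^ 2 + ‖Ω 0‖ ^ 2
                  + ‖Θ 0‖ ^ 2) := by
  have hD : (0:ℝ) < 4*(1+ϱ₀^2+γ^2) := by positivity
  set δ : ℝ := min β 1 / (4*(1+ϱ₀^2+γ^2)) with hδdef
  have hδ : 0 < δ := div_pos (lt_min hβ one_pos) hD
  have h1 : 4*δ*(1+ϱ₀^2+γ^2) ≤ 1 := by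
    rw [hδdef]; rw [div_eq_inv_mul]
    have : min β 1 ≤ 1 := min_le_right _ _
    calc 4 * ((4*(1+ϱ₀^2+γ^2))⁻¹ * min β 1) * (1+ϱ₀^2+γ^2)
        = min β 1 := by field_simp
      _ ≤ 1 := this
  have h2 : 4*δ*(1+ϱ₀^2+γ^2) ≤ β := by
    rw [hδdef]; rw [div_eq_inv_mul]
    calc 4 * ((4*(1+ϱ₀^2+γ^2))⁻¹ * min β 1) * (1+ϱ₀^2+γ^2)
        = min β 1 := by field_simp
      _ ≤ β := min_le_left _ _
  refine ⟨2, one_le_two, δ, hδ, ?_⟩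
  rintro ϱ ⟨hϱ0, hϱle⟩ A Ω Θ A' Ω' Θ' hA hΩ hΘ e1 e2 e3 t ht
  -- complex form of the equations
  have EA : ∀ s, A' s = -((ϱ:ℂ) * Ω s) := fun s => by linear_combination e1 s
  have EΩ : ∀ s, Ω' s = -((ϱ:ℂ)^2 * Ω s) + (ϱ:ℂ)*A s + (γ:ℂ)*(ϱ:ℂ)*Θ s := fun s => by
    linear_combination e2 s
  have EΘ : ∀ s, Θ' s = -((β:ℂ)*(ϱ:ℂ)^2 * Θ s) - (γ:ℂ)*(ϱ:ℂ)*Ω s := fun s => by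
    linear_combination e3 s
  set a1 : ℝ → ℝ := fun s => (A s).re with ha1
  set a2 : ℝ → ℝ := fun s => (A s).im with ha2
  set o1 : ℝ → ℝ := fun s => (Ω s).re with ho1
  set o2 : ℝ → ℝ := fun s => (Ω s).im with ho2
  set p1 : ℝ → ℝ := fun s => (Θ s).re with hp1
  set p2 : ℝ → ℝ := fun s => (Θ s).im with hp2
  have simp_re : ∀ s, (A' s).re = -(ϱ * o1 s) := fun s => by
    rw [EA s]; simp [ho1, Complex.re_ofReal_mul]
  have simp_im : ∀ s, (A' s).im = -(ϱ * o2 s) := fun s => by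
    rw [EA s]; simp [ho2, Complex.im_ofReal_mul]
  have da1 : ∀ s, HasDerivAt a1 (-(ϱ * o1 s)) s := fun s => by
    have := comp_re (hA s); rwa [simp_re s] at this
  have da2 : ∀ s, HasDerivAt a2 (-(ϱ * o2 s)) s := fun s => by
    have := comp_im (hA s); rwa [simp_im s] at this
  have do1 : ∀ s, HasDerivAt o1 (-(ϱ^2*o1 s) + ϱ*a1 s + γ*ϱ*p1 s) s := fun s => by
    have h := comp_re (hΩ s)
    have : (Ω' s).re = -(ϱ^2*o1 s) + ϱ*a1 s + γ*ϱ*p1 s := by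
      rw [EΩ s]
      simp [ha1, ho1, hp1, ← Complex.ofReal_pow, ← Complex.ofReal_mul, Complex.re_ofReal_mul]
    rwa [this] at h
  have do2 : ∀ s, HasDerivAt o2 (-(ϱ^2*o2 s) + ϱ*a2 s + γ*ϱ*p2 s) s := fun s => by
    have h := comp_im (hΩ s)
    have : (Ω' s).im = -(ϱ^2*o2 s) + ϱ*a2 s + γ*ϱ*p2 s := by
      rw [EΩ s]
      simp [ha2, ho2, hp2, ← Complex.ofReal_pow, ← Complex.ofReal_mul, Complex.im_ofReal_mul]
    rwa [this] at h
  have dp1 : ∀ s, HasDerivAt p1 (-(β*ϱ^2*p1 s) - γ*ϱ*o1 s) s := fun s => by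
    have h := comp_re (hΘ s)
    have : (Θ' s).re = -(β*ϱ^2*p1 s) - γ*ϱ*o1 s := by
      rw [EΘ s]
      simp [ho1, hp1, ← Complex.ofReal_pow, ← Complex.ofReal_mul, Complex.re_ofReal_mul, mul_assoc]
    rwa [this] at h
  have dp2 : ∀ s, HasDerivAt p2 (-(β*ϱ^2*p2 s) - γ*ϱ*o2 s) s := fun s => by
    have h := comp_im (hΘ s)
    have : (Θ' s).im = -(β*ϱ^2*p2 s) - γ*ϱ*o2 s := by
      rw [EΘ s]
      simp [ho2, hp2, ← Complex.ofReal_pow, ← Complex.ofReal_mul, Complex.im_ofReal_mul, mul_assoc]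
    rwa [this] at h
  -- Lyapunov functional
  set f : ℝ → ℝ := fun s => a1 s*a1 s + a2 s*a2 s + o1 s*o1 s + o2 s*o2 s + p1 s*p1 s + p2 s*p2 s
      - 2*δ*ϱ*(a1 s*o1 s + a2 s*o2 s) with hfdef
  set F : ℝ → ℝ := fun s =>
      ((-(ϱ * o1 s))*a1 s + a1 s*(-(ϱ * o1 s)))
    + ((-(ϱ * o2 s))*a2 s + a2 s*(-(ϱ * o2 s)))
    + ((-(ϱ^2*o1 s) + ϱ*a1 s + γ*ϱ*p1 s)*o1 s + o1 s*(-(ϱ^2*o1 s) + ϱ*a1 s + γ*ϱ*p1 s))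
    + ((-(ϱ^2*o2 s) + ϱ*a2 s + γ*ϱ*p2 s)*o2 s + o2 s*(-(ϱ^2*o2 s) + ϱ*a2 s + γ*ϱ*p2 s))
    + ((-(β*ϱ^2*p1 s) - γ*ϱ*o1 s)*p1 s + p1 s*(-(β*ϱ^2*p1 s) - γ*ϱ*o1 s))
    + ((-(β*ϱ^2*p2 s) - γ*ϱ*o2 s)*p2 s + p2 s*(-(β*ϱ^2*p2 s) - γ*ϱ*o2 s))
    - 2*δ*ϱ*(((-(ϱ * o1 s))*o1 s + a1 s*(-(ϱ^2*o1 s) + ϱ*a1 s + γ*ϱ*p1 s))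
            + ((-(ϱ * o2 s))*o2 s + a2 s*(-(ϱ^2*o2 s) + ϱ*a2 s + γ*ϱ*p2 s))) with hFdef
  have hf : ∀ s, HasDerivAt f (F s) s := fun s => by
    exact ((((((((da1 s).mul (da1 s)).add ((da2 s).mul (da2 s))).add
      ((do1 s).mul (do1 s))).add ((do2 s).mul (do2 s))).add
      ((dp1 s).mul (dp1 s))).add ((dp2 s).mul (dp2 s))).sub
      (HasDerivAt.const_mul (2*δ*ϱ)
        ((((da1 s).mul (do1 s))).add (((da2 s).mul (do2 s))))))
  -- the differential inequality
  have hineq : ∀ s, F s + δ*ϱ^2 * f s ≤ 0 := fun s => by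
    have k1 := quad3 β γ ϱ₀ δ ϱ (a1 s) (o1 s) (p1 s) hδ h1 h2 hϱ0 hϱle
    have k2 := quad3 β γ ϱ₀ δ ϱ (a2 s) (o2 s) (p2 s) hδ h1 h2 hϱ0 hϱle
    rw [hFdef, hfdef]
    dsimp only
    nlinarith [k1, k2]
  -- monotonicity of f * exp
  set g : ℝ → ℝ := fun s => f s * Real.exp (δ*ϱ^2*s) with hgdef
  have hexp : ∀ s, HasDerivAt (fun u => Real.exp (δ*ϱ^2*u)) (Real.exp (δ*ϱ^2*s) * (δ*ϱ^2*1)) s :=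
    fun s => ((hasDerivAt_id s).const_mul (δ*ϱ^2)).exp
  have hg : ∀ s, HasDerivAt g (F s * Real.exp (δ*ϱ^2*s) + f s * (Real.exp (δ*ϱ^2*s) * (δ*ϱ^2*1))) s :=
    fun s => (hf s).mul (hexp s)
  have hganti : Antitone g := by
    apply antitone_of_deriv_nonpos
    · exact fun s => ((hg s).differentiableAt)
    · intro s
      rw [(hg s).deriv]
      have h := hineq s
      nlinarith [Real.exp_pos (δ*ϱ^2*s), mul_nonpos_of_nonpos_of_nonneg h (Real.exp_pos (δ*ϱ^2*s)).le]
  have hgt : g t ≤ g 0 := hganti ht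
  -- comparison with the energy
  have hδϱ : δ*ϱ ≤ 1/8 := by nlinarith [sq_nonneg (ϱ₀ - 1), sq_nonneg γ, mul_le_mul_of_nonneg_left hϱle hδ.le]
  have hδϱ0 : 0 ≤ δ*ϱ := mul_nonneg hδ.le hϱ0
  set E : ℝ → ℝ := fun s => a1 s^2 + a2 s^2 + o1 s^2 + o2 s^2 + p1 s^2 + p2 s^2 with hEdef
  have hEs : ∀ s, ‖A s‖ ^ 2 + ‖Ω s‖ ^ 2 + ‖Θ s‖ ^ 2
      = E s := fun s => by
    rw [hEdef]
    simp only [Complex.sq_norm, Complex.normSq_apply, ha1, ha2, ho1, ho2, hp1, hp2]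
    ring
  have hEnn : ∀ s, 0 ≤ E s := fun s => by rw [hEdef]; positivity
  have hlow : ∀ s, (3/4) * E s ≤ f s := fun s => by
    rw [hfdef, hEdef]; dsimp only
    nlinarith [mul_nonneg hδϱ0 (sq_nonneg (a1 s - o1 s)), mul_nonneg hδϱ0 (sq_nonneg (a2 s - o2 s)),
      mul_nonneg (sub_nonneg.2 hδϱ) (sq_nonneg (a1 s)), mul_nonneg (sub_nonneg.2 hδϱ) (sq_nonneg (o1 s)),
      mul_nonneg (sub_nonneg.2 hδϱ) (sq_nonneg (a2 s)), mul_nonneg (sub_nonneg.2 hδϱ) (sq_nonneg (o2 s)),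
      sq_nonneg (p1 s), sq_nonneg (p2 s)]
  have hhigh : f 0 ≤ (5/4) * E 0 := by
    rw [hfdef, hEdef]; dsimp only
    nlinarith [mul_nonneg hδϱ0 (sq_nonneg (a1 0 + o1 0)), mul_nonneg hδϱ0 (sq_nonneg (a2 0 + o2 0)),
      mul_nonneg (sub_nonneg.2 hδϱ) (sq_nonneg (a1 0)), mul_nonneg (sub_nonneg.2 hδϱ) (sq_nonneg (o1 0)),
      mul_nonneg (sub_nonneg.2 hδϱ) (sq_nonneg (a2 0)), mul_nonneg (sub_nonneg.2 hδϱ) (sq_nonneg (o2 0)),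
      sq_nonneg (p1 0), sq_nonneg (p2 0)]
  set X : ℝ := Real.exp (δ*ϱ^2*t) with hXdef
  have hXpos : 0 < X := Real.exp_pos _
  have hgt' : f t * X ≤ f 0 := by
    have h0 : g 0 = f 0 := by rw [hgdef]; simp
    have h1' : g t = f t * X := by rw [hgdef]
    rw [h0, h1'] at hgt; exact hgt
  clear_value f F g E X
  have hEX : E t * X ≤ 4 * E 0 := by
    have hm := mul_le_mul_of_nonneg_right (hlow t) hXpos.le
    linarith [hEnn 0, hgt', hhigh, hm]
  set ε : ℝ := Real.exp (-(δ/2) * ϱ^2 * t) with hεdef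
  have hεnn : 0 ≤ ε := by rw [hεdef]; positivity
  have hee : ε * ε * X = 1 := by
    rw [hεdef, hXdef, ← Real.exp_add, ← Real.exp_add,
      show (-(δ/2) * ϱ^2 * t + -(δ/2) * ϱ^2 * t + δ*ϱ^2*t) = 0 by ring, Real.exp_zero]
  clear_value ε
  have h2 : E t ≤ (2*ε)^2 * E 0 := by
    nlinarith [mul_le_mul_of_nonneg_right hEX (mul_nonneg hεnn hεnn), hee, hEnn t, hEnn 0, hεnn,
      hXpos.le]
  have hsq20 : 0 ≤ 2*ε := by linarith
  calc Real.sqrt (‖A t‖ ^ 2 + ‖Ω t‖ ^ 2 + ‖Θ t‖ ^ 2)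
      = Real.sqrt (E t) := by rw [hEs t]
    _ ≤ Real.sqrt ((2*ε)^2 * E 0) := Real.sqrt_le_sqrt h2
    _ = 2*ε * Real.sqrt (E 0) := by
        rw [Real.sqrt_mul (sq_nonneg (2*ε)), Real.sqrt_sq hsq20]
    _ = 2 * ε * Real.sqrt (‖A 0‖ ^ 2 + ‖Ω 0‖ ^ 2 + ‖Θ 0‖ ^ 2) := by
        rw [hEs 0]
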